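/- Suppose char F ≠ 3 and ω ∈ F satisfies ω² + ω + 1 = 0. If p(x₁,…,xₘ) is a multilinear commutative non-associative polynomial over F, then the image of p evaluated on 𝔐₀ is either {0} or all of 𝔐₀. -/

import Mathlib

/-- The 2-dimensional "good basis" algebra `𝔐₀` with basis `U, V` satisfying
`U² = V`, `V² = U`, `U·V = V·U = 0`; coordinates w.r.t. the basis `{U, V}`. -/
def GoodAlg (F : Type*) := F × F

namespace GoodAlg

variable {F : Type*} [Field F]

instance : AddCommGroup (GoodAlg F) := inferInstanceAs (AddCommGroup (F × F))
instance : Module F (GoodAlg F) := inferInstanceAs (Module F (F × F))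

def mk2 (a b : F) : GoodAlg F := (a, b)

/-- Coefficient of `U`. -/
def uc (x : GoodAlg F) : F := x.1
/-- Coefficient of `V`. -/
def vc (x : GoodAlg F) : F := x.2

/-- Multiplication: `(aU + bV)·(cU + dV) = bd·U + ac·V`, i.e. `U² = V`, `V² = U`, `UV = VU = 0`. -/
instance : Mul (GoodAlg F) := ⟨fun x y => mk2 (vc x * vc y) (uc x * uc y)⟩

/-- The basis element `U`. -/
def U : GoodAlg F := mk2 1 0
/-- The basis element `V`. -/
def V : GoodAlg F := mk2 0 1

end GoodAlg

/-- The multiset of occurrences of variables in a non-associative monomial. -/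
def occurs {α : Type*} : FreeMagma α → Multiset α
  | .of a => {a}
  | .mul x y => occurs x + occurs y

/-- A (non-associative) multilinear polynomial in `m` variables over `F`, encoded as a finitely
supported linear combination of non-associative monomials (elements of the free magma), is
multilinear if every monomial contains each of the `m` variables exactly once. -/
def IsMultilinear {F : Type*} [Field F] {m : ℕ} (p : FreeMagma (Fin m) →₀ F) : Prop :=
  ∀ w ∈ p.support, occurs w = (Finset.univ : Finset (Fin m)).val

/-- Evaluation of a non-associative polynomial on an `F`-algebra `A`. -/
def evalPoly {F : Type*} [Field F] {A : Type*} [AddCommGroup A] [Module F A] [Mul A]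
    {m : ℕ} (p : FreeMagma (Fin m) →₀ F) (v : Fin m → A) : A :=
  p.sum fun w c => c • (FreeMagma.lift v : FreeMagma (Fin m) →ₙ* A) w

-- ===================== new stuff =====================

/-- even-depth and odd-depth leaf multisets -/
def evod {α : Type*} : FreeMagma α → Multiset α × Multiset α
  | .of a => ({a}, 0)
  | .mul x y => ((evod x).2 + (evod y).2, (evod x).1 + (evod y).1)

lemma evod_add (α : Type*) (w : FreeMagma α) : (evod w).1 + (evod w).2 = occurs w := by
  induction w with
  | ih1 a => simp [evod, occurs]
  | ih2 x y ihx ihy =>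
      show ((evod x).2 + (evod y).2) + ((evod x).1 + (evod y).1) = occurs x + occurs y
      rw [← ihx, ← ihy]; abel

lemma evod_card (α : Type*) (w : FreeMagma α) :
    ((Multiset.card (evod w).1 : ZMod 3)) = (Multiset.card (evod w).2 : ZMod 3) + 1 := by
  induction w with
  | ih1 a => simp [evod]
  | ih2 x y ihx ihy =>
      show ((Multiset.card ((evod x).2 + (evod y).2) : ZMod 3)) =
        ((Multiset.card ((evod x).1 + (evod y).1) : ZMod 3)) + 1
      simp only [Multiset.card_add, Nat.cast_add]
      rw [ihx, ihy]; ring_nf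
      rw [show (3 : ZMod 3) = 0 by decide]
      ring

section Field
variable {F : Type*} [Field F] {m : ℕ}

lemma goodalg_mul_fst (x y : GoodAlg F) : (x * y).1 = x.2 * y.2 := rfl
lemma goodalg_mul_snd (x y : GoodAlg F) : (x * y).2 = x.1 * y.1 := rfl

lemma lift_eval (v : Fin m → GoodAlg F) (w : FreeMagma (Fin m)) :
    (FreeMagma.lift v : FreeMagma (Fin m) →ₙ* GoodAlg F) w =
      ( ((evod w).1.map (fun i => (v i).1)).prod * ((evod w).2.map (fun i => (v i).2)).prod,
        ((evod w).1.map (fun i => (v i).2)).prod * ((evod w).2.map (fun i => (v i).1)).prod ) := by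
  induction w with
  | ih1 a => show v a = _; simp [evod]; rfl
  | ih2 x y ihx ihy =>
      show (FreeMagma.lift v) x * (FreeMagma.lift v) y = _
      rw [ihx, ihy]
      apply Prod.ext
      · skip
        show (((evod x).1.map fun i => (v i).2).prod * ((evod x).2.map fun i => (v i).1).prod) *
          (((evod y).1.map fun i => (v i).2).prod * ((evod y).2.map fun i => (v i).1).prod) = _
        show _ = (((evod x).2 + (evod y).2).map fun i => (v i).1).prod *
          (((evod x).1 + (evod y).1).map fun i => (v i).2).prod
        simp only [Multiset.map_add, Multiset.prod_add]
        ring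
      · skip
        show (((evod x).1.map fun i => (v i).1).prod * ((evod x).2.map fun i => (v i).2).prod) *
          (((evod y).1.map fun i => (v i).1).prod * ((evod y).2.map fun i => (v i).2).prod) = _
        show _ = (((evod x).2 + (evod y).2).map fun i => (v i).2).prod *
          (((evod x).1 + (evod y).1).map fun i => (v i).1).prod
        simp only [Multiset.map_add, Multiset.prod_add]
        ring

/-- the Finset of even-depth variables -/
def Sw (w : FreeMagma (Fin m)) : Finset (Fin m) := (evod w).1.toFinset

lemma Sw_val {w : FreeMagma (Fin m)} (hw : occurs w = (Finset.univ : Finset (Fin m)).val) :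
    (Sw w).val = (evod w).1 := by
  have hle : (evod w).1 ≤ (Finset.univ : Finset (Fin m)).val := by
    rw [← hw, ← evod_add]; exact le_add_right le_rfl
  have hnd : (evod w).1.Nodup := Multiset.nodup_of_le hle Finset.univ.nodup
  exact Multiset.dedup_eq_self.mpr hnd

lemma Swc_val {w : FreeMagma (Fin m)} (hw : occurs w = (Finset.univ : Finset (Fin m)).val) :
    ((Sw w)ᶜ).val = (evod w).2 := by
  have h1 : (Sw w)ᶜ = Finset.univ \ Sw w := by simp [Finset.compl_eq_univ_sdiff]
  rw [h1, Finset.sdiff_val, Sw_val hw, ← hw, ← evod_add]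
  exact (add_tsub_cancel_left _ _)

lemma lift_eval_finset {w : FreeMagma (Fin m)}
    (hw : occurs w = (Finset.univ : Finset (Fin m)).val) (v : Fin m → GoodAlg F) :
    (FreeMagma.lift v : FreeMagma (Fin m) →ₙ* GoodAlg F) w =
      ( (∏ i ∈ Sw w, (v i).1) * (∏ i ∈ (Sw w)ᶜ, (v i).2),
        (∏ i ∈ Sw w, (v i).2) * (∏ i ∈ (Sw w)ᶜ, (v i).1) ) := by
  rw [lift_eval]
  have e1 : ∀ f : Fin m → F, (∏ i ∈ Sw w, f i) = ((evod w).1.map f).prod := by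
    intro f; rw [Finset.prod, Sw_val hw]
  have e2 : ∀ f : Fin m → F, (∏ i ∈ (Sw w)ᶜ, f i) = ((evod w).2.map f).prod := by
    intro f; rw [Finset.prod, Swc_val hw]
  rw [e1, e1, e2, e2]

lemma card_class {w : FreeMagma (Fin m)}
    (hw : occurs w = (Finset.univ : Finset (Fin m)).val) :
    (2 * (Sw w).card : ZMod 3) = (m : ZMod 3) + 1 := by
  have h1 : (Sw w).card + ((Sw w)ᶜ).card = m := by
    simpa using Finset.card_add_card_compl (Sw w)
  have h2 : (Sw w).card = Multiset.card (evod w).1 := by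
    rw [← Sw_val hw]; rfl
  have h3 : ((Sw w)ᶜ).card = Multiset.card (evod w).2 := by
    rw [← Swc_val hw]; rfl
  have h4 := evod_card (Fin m) w
  rw [← h2, ← h3] at h4
  have h5 : ((Sw w).card : ZMod 3) + (((Sw w)ᶜ).card : ZMod 3) = (m : ZMod 3) := by
    rw [← Nat.cast_add, h1]
  rw [h4] at h5 ⊢
  ring_nf
  ring_nf at h5
  rw [← h5]; ring

end Field

open MvPolynomial

section P2
variable {F : Type*} [Field F] {m : ℕ}

/-- indicator finsupp of a finset -/
def indic (S : Finset (Fin m)) : Fin m →₀ ℕ :=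
  ⟨S, fun i => if i ∈ S then 1 else 0, by intro a; simp⟩

lemma indic_apply (S : Finset (Fin m)) (i : Fin m) : indic S i = if i ∈ S then 1 else 0 := rfl

lemma indic_inj : Function.Injective (indic (m := m)) := by
  intro S T h
  ext i
  have := congrFun (congrArg (fun f : Fin m →₀ ℕ => (f : Fin m → ℕ)) h) i
  simp only [indic_apply] at this
  by_cases hS : i ∈ S <;> by_cases hT : i ∈ T <;> simp_all

lemma indic_erase_add {S : Finset (Fin m)} {j : Fin m} (hj : j ∈ S) :
    indic (S.erase j) + Finsupp.single j 1 = indic S := by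
  ext i
  simp only [Finsupp.add_apply, indic_apply, Finsupp.single_apply]
  rcases eq_or_ne i j with rfl | hij
  · simp [hj]
  · simp [Finset.mem_erase, hij, Ne.symm hij]

lemma X_mul_monomial_indic {S : Finset (Fin m)} {j : Fin m} (hj : j ∈ S) (c : F) :
    (X j : MvPolynomial (Fin m) F) * monomial (indic (S.erase j)) c = monomial (indic S) c := by
  have hX : (X j : MvPolynomial (Fin m) F) = monomial (Finsupp.single j 1) 1 := rfl
  rw [hX, monomial_mul, one_mul, add_comm, indic_erase_add hj]

lemma eval_monomial_indic (x : Fin m → F) (S : Finset (Fin m)) (c : F) :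
    eval x (monomial (indic S) c) = c * ∏ i ∈ S, x i := by
  rw [eval_monomial]
  congr 1
  have : (indic S).support = S := rfl
  rw [Finsupp.prod, this]
  apply Finset.prod_congr rfl
  intro i hi
  rw [indic_apply, if_pos hi, pow_one]

lemma coeff_sum_monomial_indic {ι : Type*} (s : Finset ι) (g : ι → Finset (Fin m)) (c : ι → F)
    (T : Finset (Fin m)) :
    coeff (indic T) (∑ w ∈ s, monomial (indic (g w)) (c w)) =
      ∑ w ∈ s.filter (fun w => g w = T), c w := by
  rw [MvPolynomial.coeff_sum, Finset.sum_filter]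
  apply Finset.sum_congr rfl
  intro w _
  rw [coeff_monomial]
  by_cases h : g w = T
  · rw [if_pos h, if_pos (by rw [h])]
  · rw [if_neg h, if_neg (fun hc => h (indic_inj hc))]

lemma sum_monomial_indic_eq_zero_iff {ι : Type*} (s : Finset ι) (g : ι → Finset (Fin m))
    (c : ι → F) :
    (∑ w ∈ s, monomial (indic (g w)) (c w)) = 0 ↔
      ∀ T : Finset (Fin m), ∑ w ∈ s.filter (fun w => g w = T), c w = 0 := by
  constructor
  · intro h T
    rw [← coeff_sum_monomial_indic s g c T, h, coeff_zero]
  · intro h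
    have : (∑ w ∈ s, monomial (indic (g w)) (c w)) =
        ∑ T ∈ s.image g, ∑ w ∈ s.filter (fun w => g w = T), monomial (indic (g w)) (c w) :=
      (Finset.sum_fiberwise_of_maps_to (fun w hw => Finset.mem_image_of_mem g hw) _).symm
    rw [this]
    apply Finset.sum_eq_zero
    intro T _
    have : ∑ w ∈ s.filter (fun w => g w = T), monomial (indic (g w)) (c w) =
        ∑ w ∈ s.filter (fun w => g w = T), monomial (indic T) (c w) := by
      apply Finset.sum_congr rfl
      intro w hw
      rw [(Finset.mem_filter.mp hw).2]
    rw [this, ← map_sum, h T, map_zero]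

/-- a nonzero poly of per-variable degree ≤ 2 vanishing identically must be 0,
provided the field has a finset of ≥ 3 elements -/
lemma grid_zero (s : Finset F) (hs : 2 < s.card) :
    ∀ (n : ℕ) (f : MvPolynomial (Fin n) F), (∀ i, degreeOf i f ≤ 2) →
      (∀ x : Fin n → F, eval x f = 0) → f = 0 := by
  intro n
  induction n with
  | zero =>
      intro f _ hz
      rw [eq_C_of_isEmpty f] at hz ⊢
      have := hz fun _ => 0
      rw [eval_C] at this
      rw [this, map_zero]
  | succ n ih =>
      intro f hdeg hz
      have key : ∀ k, (finSuccEquiv F n f).coeff k = 0 := by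
        intro k
        apply ih
        · intro i
          exact le_trans (degreeOf_coeff_finSuccEquiv f i k) (hdeg i.succ)
        · intro x
          have hqx : (Polynomial.map (eval x) (finSuccEquiv F n f)) = 0 := by
            apply Polynomial.eq_zero_of_natDegree_lt_card_of_eval_eq_zero' _ s
            · intro y _
              rw [← eval_eq_eval_mv_eval']
              exact hz _
            · refine lt_of_le_of_lt (le_trans Polynomial.natDegree_map_le ?_) hs
              rw [natDegree_finSuccEquiv]
              exact hdeg 0
          have := congrArg (fun q => Polynomial.coeff q k) hqx
          simpa [Polynomial.coeff_map] using this
      have : finSuccEquiv F n f = 0 := Polynomial.ext fun k => by rw [key k]; simp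
      have h2 : f = 0 := by
        have := congrArg (finSuccEquiv F n).symm this
        simpa using this
      exact h2

/-- divisors of a polynomial not containing x_j do not contain x_j -/
lemma degreeOf_dvd_eq_zero {n : ℕ} (j : Fin (n + 1)) (π f : MvPolynomial (Fin (n + 1)) F)
    (hf : f ≠ 0) (hd : π ∣ f) (h0 : degreeOf j f = 0) : degreeOf j π = 0 := by
  obtain ⟨v, rfl⟩ := hd
  have hπ : π ≠ 0 := fun h => hf (by simp [h])
  have hv : v ≠ 0 := fun h => hf (by simp [h])
  set e := Equiv.swap j (0 : Fin (n + 1)) with he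
  have hinj : Function.Injective e := e.injective
  have hdeg : ∀ (g : MvPolynomial (Fin (n + 1)) F) (i : Fin (n + 1)),
      degreeOf (e i) (rename e g) = degreeOf i g := fun g i =>
    degreeOf_rename_of_injective hinj i
  have hej : e j = 0 := Equiv.swap_apply_left _ _
  have hren : (rename (e : Fin (n+1) → Fin (n+1)) (π * v)) = rename e π * rename e v :=
    map_mul _ _ _
  have hrF : ∀ g : MvPolynomial (Fin (n + 1)) F, g ≠ 0 → rename (e : Fin (n+1) → Fin (n+1)) g ≠ 0 := by
    intro g hg hc
    exact hg ((map_eq_zero_iff _ (rename_injective _ hinj)).mp hc)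
  have hfs : ∀ g : MvPolynomial (Fin (n + 1)) F, g ≠ 0 → finSuccEquiv F n g ≠ 0 := by
    intro g hg hc
    exact hg ((map_eq_zero_iff _ (AlgEquiv.injective _)).mp hc)
  have h1 : degreeOf 0 (rename (e : Fin (n+1) → Fin (n+1)) (π * v)) = 0 := by
    rw [← hej, hdeg]; exact h0
  rw [← natDegree_finSuccEquiv, hren, map_mul] at h1
  rw [Polynomial.natDegree_mul (hfs _ (hrF _ hπ)) (hfs _ (hrF _ hv))] at h1
  have h2 : (finSuccEquiv F n (rename e π)).natDegree = 0 := Nat.eq_zero_of_add_eq_zero_right h1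
  rw [natDegree_finSuccEquiv, ← hej, hdeg] at h2
  exact h2

lemma eq_C_of_degreeOf_eq_zero {n : ℕ} {u : MvPolynomial (Fin n) F}
    (h : ∀ i, degreeOf i u = 0) : ∃ c : F, u = C c := by
  refine ⟨coeff 0 u, ?_⟩
  ext d
  rcases eq_or_ne d 0 with rfl | hd
  · simp
  · rw [coeff_C, if_neg (Ne.symm hd)]
    by_contra hc
    obtain ⟨i, hi⟩ : ∃ i, d i ≠ 0 := by
      by_contra hall
      push_neg at hall
      exact hd (Finsupp.ext fun i => hall i)
    have : d i ≤ 0 := by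
      have := degreeOf_le_iff.mp (le_of_eq (h i)) d (by
        rw [MvPolynomial.mem_support_iff]; exact hc)
      exact this
    omega

end P2

section P3
open MvPolynomial

variable {F : Type*} [Field F] {m : ℕ} (p : FreeMagma (Fin m) →₀ F)

/-- the multilinear polynomial attached to `p` -/
noncomputable def qP : MvPolynomial (Fin m) F :=
  ∑ w ∈ p.support, monomial (indic (Sw w)) (p w)

noncomputable def qStar : MvPolynomial (Fin m) F :=
  ∑ w ∈ p.support, monomial (indic ((Sw w)ᶜ)) (p w)

variable (j : Fin m)

noncomputable def aP : MvPolynomial (Fin m) F :=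
  ∑ w ∈ p.support.filter (fun w => j ∈ Sw w), monomial (indic ((Sw w).erase j)) (p w)

noncomputable def bP : MvPolynomial (Fin m) F :=
  ∑ w ∈ p.support.filter (fun w => j ∉ Sw w), monomial (indic (Sw w)) (p w)

noncomputable def aS : MvPolynomial (Fin m) F :=
  ∑ w ∈ p.support.filter (fun w => j ∈ Sw w), monomial (indic ((Sw w)ᶜ)) (p w)

noncomputable def bS : MvPolynomial (Fin m) F :=
  ∑ w ∈ p.support.filter (fun w => j ∉ Sw w), monomial (indic (((Sw w)ᶜ).erase j)) (p w)

/-- fiber coefficient -/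
def CCo (T : Finset (Fin m)) : F := ∑ w ∈ p.support.filter (fun w => Sw w = T), p w

lemma qP_split : qP p = X j * aP p j + bP p j := by
  rw [qP, ← Finset.sum_filter_add_sum_filter_not p.support (fun w => j ∈ Sw w)]
  congr 1
  rw [aP, Finset.mul_sum]
  refine Finset.sum_congr rfl fun w hw => ?_
  exact (X_mul_monomial_indic (Finset.mem_filter.mp hw).2 _).symm

lemma qStar_split : qStar p = aS p j + X j * bS p j := by
  rw [qStar, ← Finset.sum_filter_add_sum_filter_not p.support (fun w => j ∈ Sw w)]
  congr 1
  rw [bS, Finset.mul_sum]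
  refine Finset.sum_congr rfl fun w hw => ?_
  exact (X_mul_monomial_indic (Finset.mem_compl.mpr (Finset.mem_filter.mp hw).2) _).symm

lemma qP_eq_zero_iff : qP p = 0 ↔ ∀ T, CCo p T = 0 :=
  sum_monomial_indic_eq_zero_iff _ _ _

lemma coeff_qP (T : Finset (Fin m)) : coeff (indic T) (qP p) = CCo p T :=
  coeff_sum_monomial_indic _ _ _ _

lemma coeff_qStar (T : Finset (Fin m)) : coeff (indic (Tᶜ)) (qStar p) = CCo p T := by
  rw [qStar, coeff_sum_monomial_indic]
  apply Finset.sum_congr _ (fun _ _ => rfl)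
  apply Finset.filter_congr
  intro w _
  exact compl_inj_iff

lemma aP_eq_zero_iff : aP p j = 0 ↔ ∀ S, j ∈ S → CCo p S = 0 := by
  rw [aP, sum_monomial_indic_eq_zero_iff]
  constructor
  · intro h S hjS
    have h2 := h (S.erase j)
    rw [Finset.filter_filter] at h2
    have hset : p.support.filter (fun w => j ∈ Sw w ∧ (Sw w).erase j = S.erase j) =
        p.support.filter (fun w => Sw w = S) := by
      apply Finset.filter_congr
      intro w _
      constructor
      · rintro ⟨hj, he⟩
        have h3 : insert j ((Sw w).erase j) = insert j (S.erase j) := by rw [he]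
        rwa [Finset.insert_erase hj, Finset.insert_erase hjS] at h3
      · intro hsw; exact ⟨by rw [hsw]; exact hjS, by rw [hsw]⟩
    rw [hset] at h2
    exact h2
  · intro h T
    rw [Finset.filter_filter]
    by_cases hjT : j ∈ T
    · rw [Finset.filter_false_of_mem, Finset.sum_empty]
      rintro w _ ⟨hj, he⟩
      rw [← he] at hjT
      exact Finset.notMem_erase j _ hjT
    · have hset : p.support.filter (fun w => j ∈ Sw w ∧ (Sw w).erase j = T) =
          p.support.filter (fun w => Sw w = insert j T) := by
        apply Finset.filter_congr
        intro w _
        constructor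
        · rintro ⟨hj, he⟩
          rw [← Finset.insert_erase hj, he]
        · intro hsw
          exact ⟨by rw [hsw]; exact Finset.mem_insert_self _ _,
            by rw [hsw]; exact Finset.erase_insert hjT⟩
      rw [hset]
      exact h (insert j T) (Finset.mem_insert_self _ _)

lemma bP_eq_zero_iff : bP p j = 0 ↔ ∀ S, j ∉ S → CCo p S = 0 := by
  rw [bP, sum_monomial_indic_eq_zero_iff]
  constructor
  · intro h S hjS
    have h2 := h S
    rw [Finset.filter_filter] at h2
    have hset : p.support.filter (fun w => j ∉ Sw w ∧ Sw w = S) =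
        p.support.filter (fun w => Sw w = S) := by
      apply Finset.filter_congr
      intro w _
      constructor
      · rintro ⟨_, h⟩; exact h
      · intro hsw; exact ⟨by rw [hsw]; exact hjS, hsw⟩
    rw [hset] at h2
    exact h2
  · intro h T
    rw [Finset.filter_filter]
    by_cases hjT : j ∈ T
    · rw [Finset.filter_false_of_mem, Finset.sum_empty]
      rintro w _ ⟨hj, he⟩
      rw [← he] at hjT
      exact hj hjT
    · have hset : p.support.filter (fun w => j ∉ Sw w ∧ Sw w = T) =
          p.support.filter (fun w => Sw w = T) := by
        apply Finset.filter_congr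
        intro w _
        constructor
        · rintro ⟨_, h⟩; exact h
        · intro hsw; exact ⟨by rw [hsw]; exact hjT, hsw⟩
      rw [hset]
      exact h T hjT

lemma aS_eq_zero_iff : aS p j = 0 ↔ ∀ S, j ∈ S → CCo p S = 0 := by
  rw [aS, sum_monomial_indic_eq_zero_iff]
  constructor
  · intro h S hjS
    have h2 := h (Sᶜ)
    rw [Finset.filter_filter] at h2
    have hset : p.support.filter (fun w => j ∈ Sw w ∧ (Sw w)ᶜ = Sᶜ) =
        p.support.filter (fun w => Sw w = S) := by
      apply Finset.filter_congr
      intro w _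
      simp only [compl_inj_iff]
      constructor
      · rintro ⟨_, h⟩; exact h
      · intro hsw; exact ⟨by rw [hsw]; exact hjS, hsw⟩
    rw [hset] at h2
    exact h2
  · intro h T
    rw [Finset.filter_filter]
    by_cases hjT : j ∈ Tᶜ
    · have hset : p.support.filter (fun w => j ∈ Sw w ∧ (Sw w)ᶜ = T) =
          p.support.filter (fun w => Sw w = Tᶜ) := by
        apply Finset.filter_congr
        intro w _
        constructor
        · rintro ⟨_, h1⟩
          rw [← h1, compl_compl]
        · intro hsw
          refine ⟨by rw [hsw]; exact hjT, by rw [hsw, compl_compl]⟩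
      rw [hset]
      exact h (Tᶜ) hjT
    · rw [Finset.filter_false_of_mem, Finset.sum_empty]
      rintro w _ ⟨hj, he⟩
      rw [← he] at hjT
      rw [compl_compl] at hjT
      exact hjT hj

lemma bS_eq_zero_iff : bS p j = 0 ↔ ∀ S, j ∉ S → CCo p S = 0 := by
  rw [bS, sum_monomial_indic_eq_zero_iff]
  constructor
  · intro h S hjS
    have h2 := h ((Sᶜ).erase j)
    rw [Finset.filter_filter] at h2
    have hset : p.support.filter (fun w => j ∉ Sw w ∧ ((Sw w)ᶜ).erase j = (Sᶜ).erase j) =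
        p.support.filter (fun w => Sw w = S) := by
      apply Finset.filter_congr
      intro w _
      constructor
      · rintro ⟨hj, he⟩
        have h3 : insert j (((Sw w)ᶜ).erase j) = insert j ((Sᶜ).erase j) := by rw [he]
        rw [Finset.insert_erase (Finset.mem_compl.mpr hj),
          Finset.insert_erase (Finset.mem_compl.mpr hjS)] at h3
        have := congrArg (fun x : Finset (Fin m) => xᶜ) h3
        simpa using this
      · intro hsw; exact ⟨by rw [hsw]; exact hjS, by rw [hsw]⟩
    rw [hset] at h2
    exact h2
  · intro h T
    rw [Finset.filter_filter]
    by_cases hjT : j ∈ T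
    · rw [Finset.filter_false_of_mem, Finset.sum_empty]
      rintro w _ ⟨hj, he⟩
      rw [← he] at hjT
      exact Finset.notMem_erase j _ hjT
    · have hset : p.support.filter (fun w => j ∉ Sw w ∧ ((Sw w)ᶜ).erase j = T) =
          p.support.filter (fun w => Sw w = (insert j T)ᶜ) := by
        apply Finset.filter_congr
        intro w _
        constructor
        · rintro ⟨hj, he⟩
          have h4 : (Sw w)ᶜ = insert j T := by
            rw [← Finset.insert_erase (Finset.mem_compl.mpr hj), he]
          rw [← compl_compl (Sw w), h4]
        · intro hsw
          constructor
          · rw [hsw, Finset.mem_compl, not_not]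
            exact Finset.mem_insert_self _ _
          · rw [hsw, compl_compl]
            exact Finset.erase_insert hjT
      rw [hset]
      exact h ((insert j T)ᶜ) (by
        rw [Finset.mem_compl]
        simp)

end P3

section P4
open MvPolynomial

variable {F : Type*} [Field F] {m : ℕ}

lemma degreeOf_sum_indic_le {ι : Type*} (s : Finset ι) (g : ι → Finset (Fin m)) (c : ι → F)
    (i : Fin m) (k : ℕ) (h : ∀ w ∈ s, indic (g w) i ≤ k) :
    degreeOf i (∑ w ∈ s, monomial (indic (g w)) (c w)) ≤ k := by
  classical
  rw [degreeOf_le_iff]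
  intro d hd
  have := MvPolynomial.support_sum hd
  obtain ⟨w, hw, hdw⟩ := Finset.mem_biUnion.mp this
  have : d = indic (g w) := by
    by_cases hc : c w = 0
    · exfalso; rw [hc, map_zero] at hdw; simp at hdw
    · rw [support_monomial, if_neg hc] at hdw
      exact Finset.mem_singleton.mp hdw
  rw [this]
  exact h w hw

lemma degreeOf_sum_indic_eq_zero {ι : Type*} (s : Finset ι) (g : ι → Finset (Fin m))
    (c : ι → F) (i : Fin m) (h : ∀ w ∈ s, i ∉ g w) :
    MvPolynomial.degreeOf i (∑ w ∈ s, MvPolynomial.monomial (indic (g w)) (c w)) = 0 :=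
  Nat.le_zero.mp (degreeOf_sum_indic_le s g c i 0
    (fun w hw => by rw [indic_apply, if_neg (h w hw)]))

lemma indic_le_one (S : Finset (Fin m)) (i : Fin m) : indic S i ≤ 1 := by
  rw [indic_apply]; split <;> omega

lemma eval_sum_indic (x : Fin m → F) {ι : Type*} (s : Finset ι) (g : ι → Finset (Fin m))
    (c : ι → F) :
    eval x (∑ w ∈ s, monomial (indic (g w)) (c w)) = ∑ w ∈ s, c w * ∏ i ∈ g w, x i := by
  rw [map_sum]
  exact Finset.sum_congr rfl fun w _ => eval_monomial_indic x (g w) (c w)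

/-- first/second coordinate additive maps -/
def fstHom : GoodAlg F →+ F where
  toFun := fun g => g.1
  map_zero' := rfl
  map_add' := fun _ _ => rfl

def sndHom : GoodAlg F →+ F where
  toFun := fun g => g.2
  map_zero' := rfl
  map_add' := fun _ _ => rfl

lemma smul_fst (c : F) (g : GoodAlg F) : (c • g).1 = c * g.1 := rfl
lemma smul_snd (c : F) (g : GoodAlg F) : (c • g).2 = c * g.2 := rfl

variable (p : FreeMagma (Fin m) →₀ F)

lemma evalPoly_fst (hml : IsMultilinear p) (v : Fin m → GoodAlg F) :
    (evalPoly p v).1 =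
      ∑ w ∈ p.support, p w * ((∏ i ∈ Sw w, (v i).1) * (∏ i ∈ (Sw w)ᶜ, (v i).2)) := by
  have h1 : evalPoly p v = ∑ w ∈ p.support,
      (p w) • ((FreeMagma.lift v : FreeMagma (Fin m) →ₙ* GoodAlg F) w) := rfl
  have h2 := map_sum (fstHom (F := F))
    (fun w => (p w) • ((FreeMagma.lift v : FreeMagma (Fin m) →ₙ* GoodAlg F) w)) p.support
  have h3 : (evalPoly p v).1 = ∑ w ∈ p.support,
      ((p w) • ((FreeMagma.lift v : FreeMagma (Fin m) →ₙ* GoodAlg F) w)).1 := by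
    rw [h1]; exact h2
  rw [h3]
  refine Finset.sum_congr rfl fun w hw => ?_
  rw [smul_fst, lift_eval_finset (hml w hw)]

lemma evalPoly_snd (hml : IsMultilinear p) (v : Fin m → GoodAlg F) :
    (evalPoly p v).2 =
      ∑ w ∈ p.support, p w * ((∏ i ∈ Sw w, (v i).2) * (∏ i ∈ (Sw w)ᶜ, (v i).1)) := by
  have h1 : evalPoly p v = ∑ w ∈ p.support,
      (p w) • ((FreeMagma.lift v : FreeMagma (Fin m) →ₙ* GoodAlg F) w) := rfl
  have h2 := map_sum (sndHom (F := F))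
    (fun w => (p w) • ((FreeMagma.lift v : FreeMagma (Fin m) →ₙ* GoodAlg F) w)) p.support
  have h3 : (evalPoly p v).2 = ∑ w ∈ p.support,
      ((p w) • ((FreeMagma.lift v : FreeMagma (Fin m) →ₙ* GoodAlg F) w)).2 := by
    rw [h1]; exact h2
  rw [h3]
  refine Finset.sum_congr rfl fun w hw => ?_
  rw [smul_snd, lift_eval_finset (hml w hw)]

/-- special substitution -/
def vSpec (j : Fin m) (s0 t0 : F) (x : Fin m → F) : Fin m → GoodAlg F :=
  fun i => if i = j then ((s0, t0) : F × F) else ((x i, 1) : F × F)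

lemma vSpec_fst (j : Fin m) (s0 t0 : F) (x : Fin m → F) (i : Fin m) :
    (vSpec j s0 t0 x i).1 = if i = j then s0 else x i := by
  rw [vSpec]; split <;> simp_all

lemma vSpec_snd (j : Fin m) (s0 t0 : F) (x : Fin m → F) (i : Fin m) :
    (vSpec j s0 t0 x i).2 = if i = j then t0 else 1 := by
  rw [vSpec]; split <;> simp_all

lemma prod_vSpec_fst_mem {S : Finset (Fin m)} {j : Fin m} (hj : j ∈ S) (s0 t0 : F)
    (x : Fin m → F) :
    (∏ i ∈ S, (vSpec j s0 t0 x i).1) = s0 * ∏ i ∈ S.erase j, x i := by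
  rw [← Finset.mul_prod_erase S _ hj, vSpec_fst, if_pos rfl]
  congr 1
  refine Finset.prod_congr rfl fun i hi => ?_
  rw [vSpec_fst, if_neg (Finset.ne_of_mem_erase hi)]

lemma prod_vSpec_fst_not_mem {S : Finset (Fin m)} {j : Fin m} (hj : j ∉ S) (s0 t0 : F)
    (x : Fin m → F) :
    (∏ i ∈ S, (vSpec j s0 t0 x i).1) = ∏ i ∈ S, x i := by
  refine Finset.prod_congr rfl fun i hi => ?_
  rw [vSpec_fst, if_neg (fun h => hj (by rw [← h]; exact hi))]

lemma prod_vSpec_snd_mem {S : Finset (Fin m)} {j : Fin m} (hj : j ∈ S) (s0 t0 : F)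
    (x : Fin m → F) :
    (∏ i ∈ S, (vSpec j s0 t0 x i).2) = t0 := by
  rw [← Finset.mul_prod_erase S _ hj, vSpec_snd, if_pos rfl]
  rw [Finset.prod_eq_one, mul_one]
  intro i hi
  rw [vSpec_snd, if_neg (Finset.ne_of_mem_erase hi)]

lemma prod_vSpec_snd_not_mem {S : Finset (Fin m)} {j : Fin m} (hj : j ∉ S) (s0 t0 : F)
    (x : Fin m → F) :
    (∏ i ∈ S, (vSpec j s0 t0 x i).2) = 1 := by
  rw [Finset.prod_eq_one]
  intro i hi
  rw [vSpec_snd, if_neg (fun h => hj (by rw [← h]; exact hi))]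

lemma evalPoly_vSpec_fst (hml : IsMultilinear p) (j : Fin m) (s0 t0 : F) (x : Fin m → F) :
    (evalPoly p (vSpec j s0 t0 x)).1 = s0 * eval x (aP p j) + t0 * eval x (bP p j) := by
  rw [evalPoly_fst p hml, ← Finset.sum_filter_add_sum_filter_not p.support (fun w => j ∈ Sw w)]
  congr 1
  · rw [aP, eval_sum_indic, Finset.mul_sum]
    refine Finset.sum_congr rfl fun w hw => ?_
    have hj := (Finset.mem_filter.mp hw).2
    rw [prod_vSpec_fst_mem hj, prod_vSpec_snd_not_mem (by rw [Finset.mem_compl, not_not]; exact hj)]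
    ring
  · rw [bP, eval_sum_indic, Finset.mul_sum]
    refine Finset.sum_congr rfl fun w hw => ?_
    have hj := (Finset.mem_filter.mp hw).2
    rw [prod_vSpec_fst_not_mem hj, prod_vSpec_snd_mem (Finset.mem_compl.mpr hj)]
    ring

lemma evalPoly_vSpec_snd (hml : IsMultilinear p) (j : Fin m) (s0 t0 : F) (x : Fin m → F) :
    (evalPoly p (vSpec j s0 t0 x)).2 = s0 * eval x (bS p j) + t0 * eval x (aS p j) := by
  rw [evalPoly_snd p hml, ← Finset.sum_filter_add_sum_filter_not p.support (fun w => j ∈ Sw w)]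
  rw [add_comm (s0 * eval x (bS p j))]
  congr 1
  · rw [aS, eval_sum_indic, Finset.mul_sum]
    refine Finset.sum_congr rfl fun w hw => ?_
    have hj := (Finset.mem_filter.mp hw).2
    rw [prod_vSpec_snd_mem hj, prod_vSpec_fst_not_mem (by rw [Finset.mem_compl, not_not]; exact hj)]
    ring
  · rw [bS, eval_sum_indic, Finset.mul_sum]
    refine Finset.sum_congr rfl fun w hw => ?_
    have hj := (Finset.mem_filter.mp hw).2
    rw [prod_vSpec_snd_not_mem hj, prod_vSpec_fst_mem (Finset.mem_compl.mpr hj)]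
    ring

lemma degreeOf_aP_le (j i : Fin m) : MvPolynomial.degreeOf i (aP p j) ≤ 1 := by
  rw [aP]; exact degreeOf_sum_indic_le _ _ _ _ _ (fun w _ => indic_le_one _ _)

lemma degreeOf_bP_le (j i : Fin m) : MvPolynomial.degreeOf i (bP p j) ≤ 1 := by
  rw [bP]; exact degreeOf_sum_indic_le _ _ _ _ _ (fun w _ => indic_le_one _ _)

lemma degreeOf_aS_le (j i : Fin m) : MvPolynomial.degreeOf i (aS p j) ≤ 1 := by
  rw [aS]; exact degreeOf_sum_indic_le _ _ _ _ _ (fun w _ => indic_le_one _ _)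

lemma degreeOf_bS_le (j i : Fin m) : MvPolynomial.degreeOf i (bS p j) ≤ 1 := by
  rw [bS]; exact degreeOf_sum_indic_le _ _ _ _ _ (fun w _ => indic_le_one _ _)

lemma exists_Sw_of_CCo_ne_zero {T : Finset (Fin m)} (h : CCo p T ≠ 0) :
    ∃ w ∈ p.support, Sw w = T := by
  obtain ⟨w, hw, _⟩ := Finset.exists_ne_zero_of_sum_ne_zero h
  exact ⟨w, (Finset.mem_filter.mp hw).1, (Finset.mem_filter.mp hw).2⟩

end P4

section P5
open MvPolynomial

lemma occurs_ne_zero {α : Type*} (w : FreeMagma α) : occurs w ≠ 0 := by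
  induction w with
  | ih1 a => simp [occurs]
  | ih2 x y ihx ihy =>
      show occurs x + occurs y ≠ 0
      simp only [ne_eq, add_eq_zero]
      tauto

variable {F : Type*} [Field F]

lemma core (h3 : (3 : F) ≠ 0) (ω : F) (hω : ω ^ 2 + ω + 1 = 0) {n : ℕ}
    (p : FreeMagma (Fin (n + 1)) →₀ F) (hml : IsMultilinear p) (hq : qP p ≠ 0) :
    ∃ (j : Fin (n + 1)) (x : Fin (n + 1) → F),
      eval x (aP p j) * eval x (aS p j) - eval x (bP p j) * eval x (bS p j) ≠ 0 := by
  classical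
  by_contra hcon
  push_neg at hcon
  -- ω facts
  have hω0 : ω ≠ 0 := by rintro rfl; simp at hω
  have hω1 : ω ≠ 1 := by
    rintro rfl
    apply h3
    linear_combination hω
  -- a 3-element finset
  set s : Finset F := insert 0 (insert 1 ({ω} : Finset F)) with hs_def
  have hs : 2 < s.card := by
    have h1 : (1 : F) ∉ ({ω} : Finset F) := by
      simp only [Finset.mem_singleton]
      exact fun h => hω1 h.symm
    have h0 : (0 : F) ∉ insert 1 ({ω} : Finset F) := by
      simp only [Finset.mem_insert, Finset.mem_singleton]
      push_neg
      exact ⟨fun h => one_ne_zero h.symm, fun h => hω0 h.symm⟩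
    rw [hs_def, Finset.card_insert_of_notMem h0, Finset.card_insert_of_notMem h1,
      Finset.card_singleton]
    norm_num
  -- polynomial conditions
  have hcond : ∀ j, aP p j * aS p j = bP p j * bS p j := by
    intro j
    have hdeg : ∀ i, degreeOf i (aP p j * aS p j - bP p j * bS p j) ≤ 2 := by
      intro i
      refine le_trans (MvPolynomial.degreeOf_sub_le _ _ _) (max_le ?_ ?_)
      · refine le_trans (MvPolynomial.degreeOf_mul_le _ _ _) ?_
        have e1 := degreeOf_aP_le p j i
        have e2 := degreeOf_aS_le p j i
        omega
      · refine le_trans (MvPolynomial.degreeOf_mul_le _ _ _) ?_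
        have e1 := degreeOf_bP_le p j i
        have e2 := degreeOf_bS_le p j i
        omega
    have hzero : ∀ x : Fin (n + 1) → F,
        eval x (aP p j * aS p j - bP p j * bS p j) = 0 := by
      intro x
      rw [map_sub, map_mul, map_mul]
      exact hcon j x
    have := grid_zero s hs (n + 1) _ hdeg hzero
    exact sub_eq_zero.mp this
  -- a nonzero coefficient
  obtain ⟨S₀, hS₀⟩ : ∃ T, CCo p T ≠ 0 := by
    by_contra hno
    push_neg at hno
    exact hq ((qP_eq_zero_iff p).mpr hno)
  -- nonvanishing of the pieces
  have haP : ∀ j, aP p j ≠ 0 := by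
    intro j ha
    have h0 : bP p j * bS p j = 0 := by rw [← hcond j, ha, zero_mul]
    have hb : bP p j = 0 := by
      rcases mul_eq_zero.mp h0 with h | h
      · exact h
      · exact (bP_eq_zero_iff p j).mpr ((bS_eq_zero_iff p j).mp h)
    exact hq (by rw [qP_split p j, ha, hb, mul_zero, zero_add])
  have haS : ∀ j, aS p j ≠ 0 := fun j h =>
    haP j ((aP_eq_zero_iff p j).mpr ((aS_eq_zero_iff p j).mp h))
  -- key identities
  have hid1 : ∀ j, aP p j * qStar p = bS p j * qP p := by
    intro j
    rw [qP_split p j, qStar_split p j]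
    linear_combination hcond j
  have hid2 : ∀ j, bP p j * qStar p = aS p j * qP p := by
    intro j
    rw [qP_split p j, qStar_split p j]
    linear_combination (-(X j : MvPolynomial (Fin (n + 1)) F)) * hcond j
  -- reduced factors
  obtain ⟨u, w', c', hrel, hcu, hcw⟩ :=
    UniqueFactorizationMonoid.exists_reduced_factors (qP p) hq (qStar p)
  have hcune : c' * u ≠ 0 := by rw [hcu]; exact hq
  have hc' : c' ≠ 0 := left_ne_zero_of_mul hcune
  have hu0 : u ≠ 0 := right_ne_zero_of_mul hcune
  have hudvd : ∀ j, u ∣ aP p j := by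
    intro j
    have h1 : aP p j * (c' * w') = bS p j * (c' * u) := by rw [hcu, hcw]; exact hid1 j
    have h2 : aP p j * w' = bS p j * u :=
      mul_left_cancel₀ hc' (by linear_combination h1)
    exact hrel.dvd_of_dvd_mul_right (by rw [h2]; exact dvd_mul_left u (bS p j))
  have hwdvd : ∀ j, w' ∣ aS p j := by
    intro j
    have h1 : bP p j * (c' * w') = aS p j * (c' * u) := by rw [hcu, hcw]; exact hid2 j
    have h2 : bP p j * w' = aS p j * u :=
      mul_left_cancel₀ hc' (by linear_combination h1)
    exact hrel.symm.dvd_of_dvd_mul_right (by rw [← h2]; exact dvd_mul_left w' (bP p j))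
  -- u and w' are constants
  have hum : ∀ i, degreeOf i u = 0 := by
    intro i
    refine degreeOf_dvd_eq_zero i u (aP p i) (haP i) (hudvd i) ?_
    rw [aP]
    exact degreeOf_sum_indic_eq_zero _ _ _ _ (fun w hw => Finset.notMem_erase i _)
  have hwm : ∀ i, degreeOf i w' = 0 := by
    intro i
    refine degreeOf_dvd_eq_zero i w' (aS p i) (haS i) (hwdvd i) ?_
    rw [aS]
    exact degreeOf_sum_indic_eq_zero _ _ _ _ (fun w hw => by
      rw [Finset.mem_compl, not_not]
      exact (Finset.mem_filter.mp hw).2)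
  obtain ⟨cu, hcu'⟩ := eq_C_of_degreeOf_eq_zero hum
  obtain ⟨cw, hcw'⟩ := eq_C_of_degreeOf_eq_zero hwm
  -- conclude qStar is a scalar multiple of qP
  have heq : qP p * w' = qStar p * u := by rw [← hcu, ← hcw]; ring
  have hq2 : C cw * qP p = C cu * qStar p := by
    rw [← hcu', ← hcw']
    linear_combination heq
  have hco := congrArg (coeff (indic (S₀ᶜ))) hq2
  rw [coeff_C_mul, coeff_C_mul, coeff_qP, coeff_qStar] at hco
  have hcu0 : cu ≠ 0 := fun h => hu0 (by rw [hcu', h, map_zero])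
  have hCC' : CCo p (S₀ᶜ) ≠ 0 := by
    intro h
    rw [h, mul_zero] at hco
    exact (mul_ne_zero hcu0 hS₀) hco.symm
  -- mod 3 contradiction
  obtain ⟨w₁, hw₁, hSw₁⟩ := exists_Sw_of_CCo_ne_zero p hS₀
  obtain ⟨w₂, hw₂, hSw₂⟩ := exists_Sw_of_CCo_ne_zero p hCC'
  have hc1 := card_class (hml w₁ hw₁)
  have hc2 := card_class (hml w₂ hw₂)
  rw [hSw₁] at hc1
  rw [hSw₂] at hc2
  have hsum : S₀.card + (S₀ᶜ).card = n + 1 := by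
    simpa using Finset.card_add_card_compl S₀
  have hcast : ((S₀.card : ZMod 3)) + (((S₀ᶜ).card : ZMod 3)) = ((n + 1 : ℕ) : ZMod 3) := by
    rw [← Nat.cast_add, hsum]
  have h20 : (2 : ZMod 3) = 0 := by linear_combination 2 * hcast - hc1 - hc2
  exact absurd h20 (by decide)

end P5

open GoodAlg in
/-- If `char F ≠ 3` and `F` contains a root of `ω² + ω + 1`, the image of any multilinear
non-associative polynomial on `𝔐₀` is `{0}` or all of `𝔐₀`. -/
theorem multilinear_image_on_M0 {F : Type*} [Field F] (h3 : (3 : F) ≠ 0)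
    (ω : F) (hω : ω ^ 2 + ω + 1 = 0) {m : ℕ}
    (p : FreeMagma (Fin m) →₀ F) (hml : IsMultilinear p) :
    Set.range (fun v : Fin m → GoodAlg F => evalPoly p v) = {0} ∨
      Set.range (fun v : Fin m → GoodAlg F => evalPoly p v) = Set.univ := by
  classical
  by_cases hq : qP p = 0
  · left
    have hCC := (qP_eq_zero_iff p).mp hq
    have hz : ∀ v : Fin m → GoodAlg F, evalPoly p v = 0 := by
      intro v
      have key : ∀ (f g : GoodAlg F → F),
          (∑ w ∈ p.support, p w * ((∏ i ∈ Sw w, f (v i)) * ∏ i ∈ (Sw w)ᶜ, g (v i))) = 0 := by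
        intro f g
        rw [← Finset.sum_fiberwise_of_maps_to (fun w hw => Finset.mem_image_of_mem Sw hw)
          (fun w => p w * ((∏ i ∈ Sw w, f (v i)) * ∏ i ∈ (Sw w)ᶜ, g (v i)))]
        apply Finset.sum_eq_zero
        intro T _
        have hsum : ∑ w ∈ p.support.filter (fun w => Sw w = T),
            p w * ((∏ i ∈ Sw w, f (v i)) * ∏ i ∈ (Sw w)ᶜ, g (v i)) =
            (∑ w ∈ p.support.filter (fun w => Sw w = T), p w) *
              ((∏ i ∈ T, f (v i)) * ∏ i ∈ Tᶜ, g (v i)) := by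
          rw [Finset.sum_mul]
          refine Finset.sum_congr rfl fun w hw => ?_
          rw [(Finset.mem_filter.mp hw).2]
        rw [hsum, show (∑ w ∈ p.support.filter (fun w => Sw w = T), p w) = CCo p T from rfl,
          hCC T, zero_mul]
      have hfst : (evalPoly p v).1 = 0 := by
        rw [evalPoly_fst p hml]
        exact key (fun z => z.1) (fun z => z.2)
      have hsnd : (evalPoly p v).2 = 0 := by
        rw [evalPoly_snd p hml]
        exact key (fun z => z.2) (fun z => z.1)
      exact Prod.ext hfst hsnd
    apply Set.eq_singleton_iff_unique_mem.mpr
    constructor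
    · exact ⟨fun _ => 0, hz _⟩
    · rintro y ⟨v, rfl⟩
      exact hz v
  · right
    cases m with
    | zero =>
        exfalso
        apply hq
        have hsupp : p.support = ∅ := by
          by_contra hne
          obtain ⟨w, hw⟩ := Finset.nonempty_iff_ne_empty.mpr hne
          have h1 := hml w hw
          have h2 : (Finset.univ : Finset (Fin 0)).val = 0 := rfl
          rw [h2] at h1
          exact occurs_ne_zero w h1
        rw [qP, hsupp, Finset.sum_empty]
    | succ n =>
        obtain ⟨j, x, hD⟩ := core h3 ω hω p hml hq
        rw [Set.eq_univ_iff_forall]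
        intro z
        set A := MvPolynomial.eval x (aP p j) with hA
        set B := MvPolynomial.eval x (bP p j) with hB
        set A' := MvPolynomial.eval x (aS p j) with hA'
        set B' := MvPolynomial.eval x (bS p j) with hB'
        refine ⟨vSpec j ((A' * z.1 - B * z.2) / (A * A' - B * B'))
          ((A * z.2 - B' * z.1) / (A * A' - B * B')) x, ?_⟩
        have h1 := evalPoly_vSpec_fst p hml j
          ((A' * z.1 - B * z.2) / (A * A' - B * B'))
          ((A * z.2 - B' * z.1) / (A * A' - B * B')) x
        have h2 := evalPoly_vSpec_snd p hml j
          ((A' * z.1 - B * z.2) / (A * A' - B * B'))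
          ((A * z.2 - B' * z.1) / (A * A' - B * B')) x
        simp only [← hA, ← hB, ← hA', ← hB'] at h1 h2
        apply Prod.ext
        · rw [h1, div_mul_eq_mul_div, div_mul_eq_mul_div, ← add_div, div_eq_iff hD]
          ring
        · rw [h2, div_mul_eq_mul_div, div_mul_eq_mul_div, ← add_div, div_eq_iff hD]
          ring
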